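/- arXiv:2504.04368 — 4 statements merged into one kernel-verified Lean document; each statement's English description precedes it below -/
import Mathlib

section
/- There exist a finite state space Ω with two states, acts f, g, h, f*, and a set Π of two information structures such that the JML preference (F ≿ G iff ∃π ∈ Π with b^u_F(π) ≥ b^u_G(π)) violates transitivity: {f} ∼ {g,h}, {f*} ∼ {g,h}, but {f*} ≻ {f}. -/
open MeasureTheory

structure Menu (Ω V : Type*) where
  acts : Finset (Ω → V)
  nonempty : acts.Nonempty

noncomputable def Menu.phi {Ω V : Type*} [Fintype Ω] (u : V → ℝ) (F : Menu Ω V)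
    (p : Ω → ℝ) : ℝ :=
  F.acts.sup' F.nonempty fun f => ∑ ω, u (f ω) * p ω

noncomputable def bval {Ω V : Type*} [Fintype Ω] (u : V → ℝ) (F : Menu Ω V)
    (π : Measure ↥(stdSimplex ℝ Ω)) : ℝ :=
  ∫ p, F.phi u (p : Ω → ℝ) ∂π

noncomputable def Menu.mix {Ω V : Type*} [AddCommMonoid V] [Module ℝ V]
    (α : ℝ) (F G : Menu Ω V) : Menu Ω V :=
  letI : DecidableEq (Ω → V) := Classical.decEq _
  ⟨(F.acts ×ˢ G.acts).image (fun fg ω => α • fg.1 ω + (1 - α) • fg.2 ω),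
   Finset.Nonempty.image (F.nonempty.product G.nonempty) _⟩

noncomputable def Menu.single {Ω V : Type*} (f : Ω → V) : Menu Ω V :=
  ⟨{f}, Finset.singleton_nonempty f⟩

noncomputable def Menu.pair {Ω V : Type*} (f g : Ω → V) : Menu Ω V :=
  letI : DecidableEq (Ω → V) := Classical.decEq _
  ⟨{f, g}, Finset.insert_nonempty f {g}⟩

/-- The JML relation for the two-element set of information structures {π₁, π₂},
with utility u = id on lottery-values in ℝ. -/
def Jrel (π₁ π₂ : Measure ↥(stdSimplex ℝ (Fin 2)))
    (F G : Menu (Fin 2) ℝ) : Prop :=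
  ∃ π ∈ ({π₁, π₂} : Set (Measure ↥(stdSimplex ℝ (Fin 2)))),
    bval (fun x : ℝ => x) G π ≤ bval (fun x : ℝ => x) F π


namespace JMLaux

open MeasureTheory

lemma mem_half : (![(1:ℝ)/2, 1/2] : Fin 2 → ℝ) ∈ stdSimplex ℝ (Fin 2) :=
  ⟨fun i => by fin_cases i <;> norm_num, by simp [Fin.sum_univ_two]; norm_num⟩

lemma mem_e0 : (![(1:ℝ), 0] : Fin 2 → ℝ) ∈ stdSimplex ℝ (Fin 2) :=
  ⟨fun i => by fin_cases i <;> norm_num, by simp [Fin.sum_univ_two]⟩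

lemma mem_e1 : (![(0:ℝ), 1] : Fin 2 → ℝ) ∈ stdSimplex ℝ (Fin 2) :=
  ⟨fun i => by fin_cases i <;> norm_num, by simp [Fin.sum_univ_two]⟩

noncomputable def ph : ↥(stdSimplex ℝ (Fin 2)) := ⟨_, mem_half⟩
noncomputable def pe0 : ↥(stdSimplex ℝ (Fin 2)) := ⟨_, mem_e0⟩
noncomputable def pe1 : ↥(stdSimplex ℝ (Fin 2)) := ⟨_, mem_e1⟩

noncomputable def pi1 : Measure ↥(stdSimplex ℝ (Fin 2)) := Measure.dirac ph

noncomputable def pi2 : Measure ↥(stdSimplex ℝ (Fin 2)) :=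
  (1/2 : ENNReal) • Measure.dirac pe0 + (1/2 : ENNReal) • Measure.dirac pe1

lemma bval_dirac (F : Menu (Fin 2) ℝ) (x : ↥(stdSimplex ℝ (Fin 2))) :
    bval (fun x : ℝ => x) F (Measure.dirac x) = F.phi (fun x : ℝ => x) (x : Fin 2 → ℝ) := by
  unfold bval
  exact integral_dirac _ _

set_option maxHeartbeats 2000000 in
lemma bval_pi2 (F : Menu (Fin 2) ℝ) :
    bval (fun x : ℝ => x) F pi2 =
      (1/2) * F.phi (fun x : ℝ => x) (pe0 : Fin 2 → ℝ)
        + (1/2) * F.phi (fun x : ℝ => x) (pe1 : Fin 2 → ℝ) := by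
  have hint : ∀ (x : ↥(stdSimplex ℝ (Fin 2))),
      Integrable (fun p : ↥(stdSimplex ℝ (Fin 2)) => F.phi (fun x : ℝ => x) (p : Fin 2 → ℝ))
        ((1/2 : ENNReal) • Measure.dirac x) := by
    intro x
    refine Integrable.smul_measure ?_ (by norm_num)
    have h := MeasureTheory.ae_eq_dirac (a := x)
      (f := fun p : ↥(stdSimplex ℝ (Fin 2)) => F.phi (fun x : ℝ => x) (p : Fin 2 → ℝ))
    exact (integrable_const _).congr h.symm
  unfold bval pi2
  rw [integral_add_measure (hint pe0) (hint pe1),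
    integral_smul_measure, integral_smul_measure, integral_dirac, integral_dirac]
  norm_num

lemma phi_single (f : Fin 2 → ℝ) (x : ↥(stdSimplex ℝ (Fin 2))) :
    (Menu.single f).phi (fun x : ℝ => x) (x : Fin 2 → ℝ)
      = f 0 * (x : Fin 2 → ℝ) 0 + f 1 * (x : Fin 2 → ℝ) 1 := by
  simp [Menu.single, Menu.phi, Fin.sum_univ_two]

lemma phi_pair (f g : Fin 2 → ℝ) (x : ↥(stdSimplex ℝ (Fin 2))) :
    (Menu.pair f g).phi (fun x : ℝ => x) (x : Fin 2 → ℝ) =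
      max (f 0 * (x : Fin 2 → ℝ) 0 + f 1 * (x : Fin 2 → ℝ) 1)
          (g 0 * (x : Fin 2 → ℝ) 0 + g 1 * (x : Fin 2 → ℝ) 1) := by
  by_cases hfg : f = g
  · subst hfg
    simp [Menu.pair, Menu.phi, Fin.sum_univ_two]
  · rw [Menu.pair, Menu.phi]
    rw [Finset.sup'_insert, Finset.sup'_singleton]
    simp [Fin.sum_univ_two, max_comm]
    exact Finset.singleton_nonempty g

lemma pi1_ne_pi2 : pi1 ≠ pi2 := by
  intro hEq
  set T := ((fun p : ↥(stdSimplex ℝ (Fin 2)) => (p : Fin 2 → ℝ) 0) ⁻¹' {(1:ℝ)/2}) with hT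
  have h1 : pi1 T = 1 := by
    rw [pi1, Measure.dirac_apply]
    simp [hT, ph, Set.indicator, Set.mem_preimage]
    rfl
  have h2 : pi2 T = 0 := by
    rw [pi2]
    simp only [Measure.add_apply, Measure.smul_apply, Measure.dirac_apply, smul_eq_mul]
    have e0 : pe0 ∉ T := by simp [hT, pe0, Set.mem_preimage]; change ¬ (1:ℝ) = 2⁻¹; norm_num
    have e1 : pe1 ∉ T := by simp [hT, pe1, Set.mem_preimage]; change ¬ (0:ℝ) = 2⁻¹; norm_num
    simp [Set.indicator_of_notMem e0, Set.indicator_of_notMem e1]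
  rw [hEq, h2] at h1
  exact one_ne_zero h1.symm

instance : IsProbabilityMeasure pi1 := by rw [pi1]; infer_instance

instance : IsProbabilityMeasure pi2 := by
  constructor
  rw [pi2]
  simp only [Measure.add_apply, Measure.smul_apply, Measure.dirac_apply,
    Set.mem_univ, Set.indicator_of_mem, Pi.one_apply, smul_eq_mul, mul_one]
  rw [show (1/2 : ENNReal) = 2⁻¹ by norm_num]
  exact ENNReal.inv_two_add_inv_two

lemma phv0 : (ph : Fin 2 → ℝ) 0 = 1/2 := rfl
lemma phv1 : (ph : Fin 2 → ℝ) 1 = 1/2 := rfl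
lemma e0v0 : (pe0 : Fin 2 → ℝ) 0 = 1 := rfl
lemma e0v1 : (pe0 : Fin 2 → ℝ) 1 = 0 := rfl
lemma e1v0 : (pe1 : Fin 2 → ℝ) 0 = 0 := rfl
lemma e1v1 : (pe1 : Fin 2 → ℝ) 1 = 1 := rfl

end JMLaux

theorem stmt6 :
    ∃ (f g h fs : Fin 2 → ℝ) (π₁ π₂ : Measure ↥(stdSimplex ℝ (Fin 2))),
      π₁ ≠ π₂ ∧ IsProbabilityMeasure π₁ ∧ IsProbabilityMeasure π₂ ∧
      -- {f} ∼ {g, h}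
      (Jrel π₁ π₂ (Menu.single f) (Menu.pair g h) ∧
        Jrel π₁ π₂ (Menu.pair g h) (Menu.single f)) ∧
      -- {f*} ∼ {g, h}
      (Jrel π₁ π₂ (Menu.single fs) (Menu.pair g h) ∧
        Jrel π₁ π₂ (Menu.pair g h) (Menu.single fs)) ∧
      -- {f*} ≻ {f}
      (Jrel π₁ π₂ (Menu.single fs) (Menu.single f) ∧
        ¬ Jrel π₁ π₂ (Menu.single f) (Menu.single fs)) := by
  classical
  open JMLaux in
  refine ⟨fun _ => 2, ![3, 0], ![0, 3], fun _ => 5/2, pi1, pi2, pi1_ne_pi2,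
    inferInstance, inferInstance, ?_⟩
  have bf1 : bval (fun x : ℝ => x) (Menu.single (fun _ => (2:ℝ))) JMLaux.pi1 = 2 := by
    rw [JMLaux.pi1, JMLaux.bval_dirac, JMLaux.phi_single, JMLaux.phv0, JMLaux.phv1]; norm_num
  have bf2 : bval (fun x : ℝ => x) (Menu.single (fun _ => (2:ℝ))) JMLaux.pi2 = 2 := by
    rw [JMLaux.bval_pi2, JMLaux.phi_single, JMLaux.phi_single,
      JMLaux.e0v0, JMLaux.e0v1, JMLaux.e1v0, JMLaux.e1v1]; norm_num
  have bfs1 : bval (fun x : ℝ => x) (Menu.single (fun _ => (5/2:ℝ))) JMLaux.pi1 = 5/2 := by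
    rw [JMLaux.pi1, JMLaux.bval_dirac, JMLaux.phi_single, JMLaux.phv0, JMLaux.phv1]; norm_num
  have bfs2 : bval (fun x : ℝ => x) (Menu.single (fun _ => (5/2:ℝ))) JMLaux.pi2 = 5/2 := by
    rw [JMLaux.bval_pi2, JMLaux.phi_single, JMLaux.phi_single,
      JMLaux.e0v0, JMLaux.e0v1, JMLaux.e1v0, JMLaux.e1v1]; norm_num
  have bgh1 : bval (fun x : ℝ => x) (Menu.pair ![(3:ℝ),0] ![(0:ℝ),3]) JMLaux.pi1 = 3/2 := by
    rw [JMLaux.pi1, JMLaux.bval_dirac, JMLaux.phi_pair, JMLaux.phv0, JMLaux.phv1]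
    norm_num
  have bgh2 : bval (fun x : ℝ => x) (Menu.pair ![(3:ℝ),0] ![(0:ℝ),3]) JMLaux.pi2 = 3 := by
    rw [JMLaux.bval_pi2, JMLaux.phi_pair, JMLaux.phi_pair,
      JMLaux.e0v0, JMLaux.e0v1, JMLaux.e1v0, JMLaux.e1v1]
    norm_num
  refine ⟨⟨⟨JMLaux.pi1, Or.inl rfl, ?_⟩, ⟨JMLaux.pi2, Or.inr rfl, ?_⟩⟩,
    ⟨⟨JMLaux.pi1, Or.inl rfl, ?_⟩, ⟨JMLaux.pi2, Or.inr rfl, ?_⟩⟩,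
    ⟨⟨JMLaux.pi1, Or.inl rfl, ?_⟩, ?_⟩⟩
  · rw [bf1, bgh1]; norm_num
  · rw [bf2, bgh2]; norm_num
  · rw [bfs1, bgh1]; norm_num
  · rw [bfs2, bgh2]; norm_num
  · rw [bf1, bfs1]; norm_num
  · rintro ⟨π, hπ, hle⟩
    rcases hπ with rfl | rfl
    · rw [bf1, bfs1] at hle; norm_num at hle
    · rw [bf2, bfs2] at hle; norm_num at hle
end

section
/- There exist a two-state space, a menu {f} and a menu {g,h}, and two information structures δ_p and π such that b^u_{\{f\}}(δ_p) > b^u_{\{g,h\}}(δ_p) while b^u_{\{f\}}(π) < b^u_{\{g,h\}}(π); hence the BML unanimity preference with Π = {δ_p, π} leaves {f} and {g,h} incomparable. -/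
open MeasureTheory

noncomputable def ptHalf : ↥(stdSimplex ℝ (Fin 2)) :=
  ⟨![1/2, 1/2], ⟨by intro i; fin_cases i <;> norm_num,
    by simp [Fin.sum_univ_two]; norm_num⟩⟩

noncomputable def ptOne : ↥(stdSimplex ℝ (Fin 2)) :=
  ⟨![1, 0], ⟨by intro i; fin_cases i <;> norm_num,
    by simp [Fin.sum_univ_two]⟩⟩

lemma bval_dirac (u : ℝ → ℝ) (F : Menu (Fin 2) ℝ) (p : ↥(stdSimplex ℝ (Fin 2))) :
    bval u F (Measure.dirac p) = F.phi u (p : Fin 2 → ℝ) := by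
  unfold bval
  rw [integral_dirac]

lemma phi_single (u : ℝ → ℝ) (f : Fin 2 → ℝ) (p : Fin 2 → ℝ) :
    (Menu.single f).phi u p = ∑ ω, u (f ω) * p ω := by
  simp [Menu.single, Menu.phi]

lemma phi_pair (u : ℝ → ℝ) (g h : Fin 2 → ℝ) (p : Fin 2 → ℝ) :
    (Menu.pair g h).phi u p = max (∑ ω, u (g ω) * p ω) (∑ ω, u (h ω) * p ω) := by
  classical
  simp [Menu.pair, Menu.phi, Finset.sup'_insert, Finset.sup'_singleton, max_comm]

theorem stmt7 :
    ∃ (f g h : Fin 2 → ℝ) (π₁ π₂ : Measure ↥(stdSimplex ℝ (Fin 2))),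
      π₁ ≠ π₂ ∧ IsProbabilityMeasure π₁ ∧ IsProbabilityMeasure π₂ ∧
      bval (fun x : ℝ => x) (Menu.pair g h) π₁ < bval (fun x : ℝ => x) (Menu.single f) π₁ ∧
      bval (fun x : ℝ => x) (Menu.single f) π₂ < bval (fun x : ℝ => x) (Menu.pair g h) π₂ ∧
      -- hence the BML unanimity preference with Π = {π₁, π₂} leaves {f} and {g,h} incomparable
      ¬ (∀ π ∈ ({π₁, π₂} : Set (Measure ↥(stdSimplex ℝ (Fin 2)))),
          bval (fun x : ℝ => x) (Menu.pair g h) π ≤ bval (fun x : ℝ => x) (Menu.single f) π) ∧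
      ¬ (∀ π ∈ ({π₁, π₂} : Set (Measure ↥(stdSimplex ℝ (Fin 2)))),
          bval (fun x : ℝ => x) (Menu.single f) π ≤ bval (fun x : ℝ => x) (Menu.pair g h) π) := by

  refine ⟨(fun _ => 2), ![3, 0], ![0, 3], Measure.dirac ptHalf, Measure.dirac ptOne, ?_⟩
  have h1 : bval (fun x : ℝ => x) (Menu.pair ![3,0] ![0,3]) (Measure.dirac ptHalf) = 3/2 := by
    rw [bval_dirac, phi_pair]
    simp [ptHalf, Fin.sum_univ_two]
    show max (3 * (2⁻¹ : ℝ)) (3 * 2⁻¹) = 3/2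
    norm_num
  have h2 : bval (fun x : ℝ => x) (Menu.single (fun _ => (2:ℝ))) (Measure.dirac ptHalf) = 2 := by
    rw [bval_dirac, phi_single]
    simp [ptHalf, Fin.sum_univ_two]
    show 2 * (2⁻¹ : ℝ) + 2 * 2⁻¹ = 2
    norm_num
  have h3 : bval (fun x : ℝ => x) (Menu.pair ![3,0] ![0,3]) (Measure.dirac ptOne) = 3 := by
    rw [bval_dirac, phi_pair]
    simp [ptOne, Fin.sum_univ_two]
    show max (3 * (1 : ℝ)) (3 * 0) = 3
    norm_num
  have h4 : bval (fun x : ℝ => x) (Menu.single (fun _ => (2:ℝ))) (Measure.dirac ptOne) = 2 := by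
    rw [bval_dirac, phi_single]
    simp [ptOne, Fin.sum_univ_two]
    show 2 * (1 : ℝ) + 2 * 0 = 2
    norm_num
  have hne : Measure.dirac ptHalf ≠ Measure.dirac ptOne := by
    intro h
    rw [h, h3] at h1
    norm_num at h1
  refine ⟨hne, inferInstance, inferInstance, by rw [h1, h2]; norm_num,
    by rw [h3, h4]; norm_num, ?_, ?_⟩
  · intro H
    have := H (Measure.dirac ptOne) (Or.inr rfl)
    rw [h3, h4] at this; norm_num at this
  · intro H
    have := H (Measure.dirac ptHalf) (Or.inl rfl)
    rw [h1, h2] at this; norm_num at this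
end

section
/- A JML preference satisfies favorable mixing monotonicity: for all menus F, G, H, H' and α ∈ [0,1], if F ≻ G and H ≻ H' then αF + (1-α)H ≻ αG + (1-α)H'. -/
open MeasureTheory

lemma phi_continuous {Ω V : Type*} [Fintype Ω] (u : V → ℝ) (F : Menu Ω V) :
    Continuous (F.phi u) := by
  apply Continuous.finset_sup'_apply F.nonempty
  intro f _
  exact continuous_finset_sum _ fun ω _ => continuous_const.mul (continuous_apply ω)

lemma phi_mix {Ω V : Type*} [Fintype Ω] [AddCommMonoid V] [Module ℝ V] (u : V → ℝ)
    (hu : ∀ (x y : V) (a b : ℝ), a + b = 1 → u (a • x + b • y) = a * u x + b * u y)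
    (α : ℝ) (h0 : 0 ≤ α) (h1 : α ≤ 1) (F H : Menu Ω V) (p : Ω → ℝ) :
    (Menu.mix α F H).phi u p = α * F.phi u p + (1 - α) * H.phi u p := by
  letI : DecidableEq (Ω → V) := Classical.decEq _
  have h1' : 0 ≤ 1 - α := by linarith
  unfold Menu.phi Menu.mix
  have key : ∀ f h : Ω → V,
      (∑ ω, u ((fun ω => α • f ω + (1 - α) • h ω) ω) * p ω) =
        α * (∑ ω, u (f ω) * p ω) + (1 - α) * (∑ ω, u (h ω) * p ω) := by
    intro f h
    simp only [hu _ _ α (1 - α) (by ring)]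
    rw [Finset.mul_sum, Finset.mul_sum, ← Finset.sum_add_distrib]
    congr 1; ext ω; ring
  apply le_antisymm
  · apply Finset.sup'_le
    intro g hg
    obtain ⟨fg, hfg, rfl⟩ := Finset.mem_image.mp hg
    rw [Finset.mem_product] at hfg
    rw [key]
    have h3 := mul_le_mul_of_nonneg_left (Finset.le_sup' (fun f => ∑ ω, u (f ω) * p ω) hfg.1) h0
    have h4 := mul_le_mul_of_nonneg_left (Finset.le_sup' (fun f => ∑ ω, u (f ω) * p ω) hfg.2) h1'
    exact add_le_add h3 h4
  · obtain ⟨f₀, hf₀, hf₀e⟩ := Finset.exists_mem_eq_sup' F.nonempty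
      (fun f => ∑ ω, u (f ω) * p ω)
    obtain ⟨h₀, hh₀, hh₀e⟩ := Finset.exists_mem_eq_sup' H.nonempty
      (fun f => ∑ ω, u (f ω) * p ω)
    rw [hf₀e, hh₀e, ← key f₀ h₀]
    refine Finset.le_sup' (fun f : Ω → V => ∑ ω, u (f ω) * p ω) ?_
    exact Finset.mem_image.mpr ⟨(f₀, h₀), Finset.mem_product.2 ⟨hf₀, hh₀⟩, rfl⟩

lemma bval_mix {Ω V : Type*} [Fintype Ω] [AddCommMonoid V] [Module ℝ V] (u : V → ℝ)
    (hu : ∀ (x y : V) (a b : ℝ), a + b = 1 → u (a • x + b • y) = a * u x + b * u y)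
    (α : ℝ) (h0 : 0 ≤ α) (h1 : α ≤ 1) (F H : Menu Ω V)
    (π : Measure ↥(stdSimplex ℝ Ω)) [IsProbabilityMeasure π] :
    bval u (Menu.mix α F H) π = α * bval u F π + (1 - α) * bval u H π := by
  haveI : CompactSpace ↥(stdSimplex ℝ Ω) :=
    isCompact_iff_compactSpace.mp (isCompact_stdSimplex ℝ Ω)
  have cF : Continuous fun p : ↥(stdSimplex ℝ Ω) => F.phi u (p : Ω → ℝ) :=
    (phi_continuous u F).comp continuous_subtype_val
  have cH : Continuous fun p : ↥(stdSimplex ℝ Ω) => H.phi u (p : Ω → ℝ) :=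
    (phi_continuous u H).comp continuous_subtype_val
  have iF : Integrable (fun p : ↥(stdSimplex ℝ Ω) => F.phi u (p : Ω → ℝ)) π :=
    cF.integrable_of_hasCompactSupport (HasCompactSupport.of_compactSpace _)
  have iH : Integrable (fun p : ↥(stdSimplex ℝ Ω) => H.phi u (p : Ω → ℝ)) π :=
    cH.integrable_of_hasCompactSupport (HasCompactSupport.of_compactSpace _)
  unfold bval
  have : ∀ p : ↥(stdSimplex ℝ Ω), (Menu.mix α F H).phi u (p : Ω → ℝ) =
      α * F.phi u (p : Ω → ℝ) + (1 - α) * H.phi u (p : Ω → ℝ) :=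
    fun p => phi_mix u hu α h0 h1 F H _
  simp only [this]
  rw [integral_add (iF.const_mul α) (iH.const_mul (1 - α)),
    integral_const_mul, integral_const_mul]

theorem stmt12 {Ω V : Type*} [Fintype Ω] [AddCommMonoid V] [Module ℝ V] (u : V → ℝ)
    (hu : ∀ (x y : V) (a b : ℝ), a + b = 1 → u (a • x + b • y) = a * u x + b * u y)
    (Pi : Set (Measure ↥(stdSimplex ℝ Ω))) (hne : Pi.Nonempty)
    (hprob : ∀ π ∈ Pi, IsProbabilityMeasure π)
    (F G H H' : Menu Ω V) (α : ℝ) (hα : α ∈ Set.Icc (0 : ℝ) 1)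
    (h1 : (∃ π ∈ Pi, bval u G π ≤ bval u F π) ∧ ¬ ∃ π ∈ Pi, bval u F π ≤ bval u G π)
    (h2 : (∃ π ∈ Pi, bval u H' π ≤ bval u H π) ∧ ¬ ∃ π ∈ Pi, bval u H π ≤ bval u H' π) :
    (∃ π ∈ Pi, bval u (Menu.mix α G H') π ≤ bval u (Menu.mix α F H) π) ∧
      ¬ ∃ π ∈ Pi, bval u (Menu.mix α F H) π ≤ bval u (Menu.mix α G H') π := by
  obtain ⟨hα0, hα1⟩ := hα
  push_neg at h1 h2
  have key : ∀ π ∈ Pi, bval u (Menu.mix α G H') π < bval u (Menu.mix α F H) π := by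
    intro π hπ
    haveI := hprob π hπ
    rw [bval_mix u hu α hα0 hα1, bval_mix u hu α hα0 hα1]
    have hFG := h1.2 π hπ
    have hHH := h2.2 π hπ
    rcases eq_or_lt_of_le hα0 with h | h
    · simp only [← h]; linarith
    · have := mul_lt_mul_of_pos_left hFG h
      have h4 : (1 - α) * bval u H' π ≤ (1 - α) * bval u H π :=
        mul_le_mul_of_nonneg_left hHH.le (by linarith)
      linarith
  obtain ⟨π₀, hπ₀⟩ := hne
  exact ⟨⟨π₀, hπ₀, (key π₀ hπ₀).le⟩, by
    push_neg; intro π hπ; exact key π hπ⟩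
end

section
/- Finite-dimensional JML duality: let K ⊆ ℝⁿ be a cone whose complement Kᶜ is a nonempty open convex cone containing the strictly negative orthant, and suppose K contains the nonnegative orthant. Then there exists a nonempty closed convex set Π of probability vectors in Δⁿ such that for all x ∈ ℝⁿ, x ∈ K if and only if there exists π ∈ Π with ⟨x, π⟩ ≥ 0. -/
open Finset

private lemma aux_le19 (a b : ℝ) (h : ∀ ε : ℝ, 0 < ε → a ≤ ε * b) : a ≤ 0 := by
  rcases le_or_gt b 0 with hb | hb
  · calc a ≤ 1 * b := h 1 one_pos
      _ = b := one_mul b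
      _ ≤ 0 := hb
  · by_contra ha
    push_neg at ha
    have h2 := h (a / (2 * b)) (by positivity)
    have h3 : a / (2 * b) * b = a / 2 := by field_simp
    rw [h3] at h2
    linarith

theorem stmt19 (n : ℕ) (K : Set (Fin n → ℝ))
    (hpos : {x : Fin n → ℝ | ∀ i, 0 ≤ x i} ⊆ K)
    (hKc_ne : Kᶜ.Nonempty) (hKc_open : IsOpen Kᶜ) (hKc_conv : Convex ℝ Kᶜ)
    (hKc_cone : ∀ x ∈ Kᶜ, ∀ c : ℝ, 0 < c → c • x ∈ Kᶜ)
    (hKc_neg : {x : Fin n → ℝ | ∀ i, x i < 0} ⊆ Kᶜ) :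
    ∃ Pi : Set (Fin n → ℝ), Pi.Nonempty ∧ IsClosed Pi ∧ Convex ℝ Pi ∧
      Pi ⊆ stdSimplex ℝ (Fin n) ∧
      ∀ x : Fin n → ℝ, x ∈ K ↔ ∃ π ∈ Pi, 0 ≤ ∑ i, x i * π i := by
  classical
  obtain ⟨y₀, hy₀⟩ := hKc_ne
  set P : Set (Fin n → ℝ) :=
    {π | π ∈ stdSimplex ℝ (Fin n) ∧ ∀ y ∈ Kᶜ, ∑ i, y i * π i ≤ 0} with hP
  -- strictness
  have hstrict : ∀ π ∈ P, ∀ y ∈ Kᶜ, ∑ i, y i * π i < 0 := by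
    intro π hπ y hy
    rcases lt_or_eq_of_le (hπ.2 y hy) with h | h
    · exact h
    exfalso
    have hsum1 : ∑ i, π i = 1 := hπ.1.2
    have hsq : 0 < ∑ i, π i * π i := by
      have hne : ∃ i, π i ≠ 0 := by
        by_contra hc
        push_neg at hc
        simp [hc] at hsum1
      obtain ⟨i, hi⟩ := hne
      have hpi : 0 < π i := lt_of_le_of_ne (hπ.1.1 i) (Ne.symm hi)
      exact Finset.sum_pos' (fun j _ => mul_self_nonneg _)
        ⟨i, Finset.mem_univ i, mul_pos hpi hpi⟩
    have hcont : Continuous fun δ : ℝ => y + δ • π :=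
      continuous_const.add (continuous_id.smul continuous_const)
    have hopen : IsOpen ((fun δ : ℝ => y + δ • π) ⁻¹' Kᶜ) := hKc_open.preimage hcont
    have h0mem : (0 : ℝ) ∈ (fun δ : ℝ => y + δ • π) ⁻¹' Kᶜ := by
      simpa using hy
    obtain ⟨ε, hε, hball⟩ := Metric.isOpen_iff.1 hopen 0 h0mem
    have hδmem : y + (ε / 2) • π ∈ Kᶜ := by
      have hb : (ε / 2) ∈ Metric.ball (0 : ℝ) ε := by
        rw [Metric.mem_ball, Real.dist_eq, sub_zero, abs_of_pos (half_pos hε)]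
        linarith
      exact hball hb
    have hle := hπ.2 _ hδmem
    have hcalc : ∑ i, (y + (ε / 2) • π) i * π i
        = ∑ i, y i * π i + (ε / 2) * ∑ i, π i * π i := by
      rw [Finset.mul_sum, ← Finset.sum_add_distrib]
      apply Finset.sum_congr rfl
      intros j _
      simp only [Pi.add_apply, Pi.smul_apply, smul_eq_mul]
      ring
    rw [hcalc, h] at hle
    nlinarith
  -- separation lemma
  have sep : ∀ x ∉ Kᶜ, ∃ π ∈ P, 0 ≤ ∑ i, x i * π i := by
    intro x hx
    obtain ⟨f, hf⟩ := geometric_hahn_banach_open_point hKc_conv hKc_open hx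
    have hfx' : ∀ a ∈ Kᶜ, ∀ c : ℝ, 0 < c → c * f a < f x := by
      intro a ha c hc
      have := hf _ (hKc_cone a ha c hc)
      simpa [map_smul, smul_eq_mul] using this
    have hfneg : ∀ a ∈ Kᶜ, f a ≤ 0 := by
      intro a ha
      apply aux_le19 (f a) (f x)
      intro ε hε
      have h1 := hfx' a ha ε⁻¹ (by positivity)
      have h2 := mul_lt_mul_of_pos_left h1 hε
      rw [← mul_assoc, mul_inv_cancel₀ (ne_of_gt hε), one_mul] at h2
      linarith
    have hfx0 : 0 ≤ f x := by
      have : -f x ≤ 0 := by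
        apply aux_le19 (-f x) (-f y₀)
        intro ε hε
        have := hfx' y₀ hy₀ ε hε
        linarith
      linarith
    set p : Fin n → ℝ := fun i => f (Pi.single i 1) with hp
    have hrepr : ∀ y : Fin n → ℝ, f y = ∑ i, y i * p i := by
      intro y
      have hy : y = ∑ i, y i • (Pi.single i (1 : ℝ) : Fin n → ℝ) := by
        funext j
        simp [Pi.single_apply, Finset.sum_apply]
      conv_lhs => rw [hy]
      rw [map_sum]
      simp [map_smul, smul_eq_mul, hp]
    have hpnn : ∀ i, 0 ≤ p i := by
      intro i
      have hkey : -p i ≤ 0 := by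
        apply aux_le19 (-p i) (∑ j, p j)
        intro ε hε
        set v : Fin n → ℝ := fun j => if j = i then -ε - 1 else -ε with hv
        have hmem : v ∈ Kᶜ := by
          apply hKc_neg
          intro j
          by_cases hji : j = i
          · simp [hv, hji]; linarith
          · simp [hv, hji]; linarith
        have hle := hfneg _ hmem
        rw [hrepr v] at hle
        have hsplit : ∑ j, v j * p j = (∑ j, (-ε) * p j) + (-1) * p i := by
          have : ∀ j ∈ Finset.univ, v j * p j
              = (-ε) * p j + (if j = i then (-1 : ℝ) * p j else 0) := by
            intro j _
            by_cases hji : j = i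
            · simp [hv, hji]; ring
            · simp [hv, hji]
          rw [Finset.sum_congr rfl this, Finset.sum_add_distrib]
          congr 1
          rw [Finset.sum_ite_eq' Finset.univ i (fun j => (-1 : ℝ) * p j)]
          simp
        rw [hsplit] at hle
        have : ∑ j, (-ε) * p j = -ε * ∑ j, p j := by rw [Finset.mul_sum]
        rw [this] at hle
        nlinarith
      linarith
    have hsumnn : 0 ≤ ∑ i, p i := Finset.sum_nonneg fun i _ => hpnn i
    have hsumpos : 0 < ∑ i, p i := by
      rcases lt_or_eq_of_le hsumnn with h | h
      · exact h
      exfalso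
      have hall : ∀ i, p i = 0 := fun i =>
        (Finset.sum_eq_zero_iff_of_nonneg (fun j _ => hpnn j)).1 h.symm i (Finset.mem_univ i)
      have hfy0 : f y₀ = 0 := by rw [hrepr]; simp [hall]
      have hfx0' : f x = 0 := by rw [hrepr]; simp [hall]
      have := hf y₀ hy₀
      rw [hfy0, hfx0'] at this
      exact lt_irrefl 0 this
    refine ⟨(∑ j, p j)⁻¹ • p, ⟨⟨fun i => ?_, ?_⟩, ?_⟩, ?_⟩
    · exact mul_nonneg (inv_nonneg.2 hsumpos.le) (hpnn i)
    · simp only [Pi.smul_apply, smul_eq_mul, ← Finset.mul_sum]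
      rw [inv_mul_cancel₀ (ne_of_gt hsumpos)]
    · intro y hy
      have heq : ∑ i, y i * ((∑ j, p j)⁻¹ • p) i = (∑ j, p j)⁻¹ * f y := by
        rw [hrepr y, Finset.mul_sum]
        apply Finset.sum_congr rfl
        intros
        simp only [Pi.smul_apply, smul_eq_mul]
        ring
      rw [heq]
      exact mul_nonpos_of_nonneg_of_nonpos (inv_nonneg.2 hsumpos.le) (hfneg y hy)
    · have heq : ∑ i, x i * ((∑ j, p j)⁻¹ • p) i = (∑ j, p j)⁻¹ * f x := by
        rw [hrepr x, Finset.mul_sum]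
        apply Finset.sum_congr rfl
        intros
        simp only [Pi.smul_apply, smul_eq_mul]
        ring
      rw [heq]
      exact mul_nonneg (inv_nonneg.2 hsumpos.le) hfx0
  -- assemble
  have h0K : (0 : Fin n → ℝ) ∈ K := hpos (fun i => le_refl 0)
  have h0notc : (0 : Fin n → ℝ) ∉ Kᶜ := by simpa using h0K
  obtain ⟨π₀, hπ₀, _⟩ := sep 0 h0notc
  refine ⟨P, ⟨π₀, hπ₀⟩, ?_, ?_, fun π hπ => hπ.1, ?_⟩
  · -- closed
    have hPeq : P = stdSimplex ℝ (Fin n) ∩ ⋂ y ∈ Kᶜ, {π | ∑ i, y i * π i ≤ 0} := by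
      ext π
      constructor
      · rintro ⟨h1, h2⟩
        exact ⟨h1, Set.mem_iInter₂.2 h2⟩
      · rintro ⟨h1, h2⟩
        exact ⟨h1, fun y hy => Set.mem_iInter₂.1 h2 y hy⟩
    rw [hPeq]
    apply (isClosed_stdSimplex ℝ (Fin n)).inter
    apply isClosed_biInter
    intro y _
    exact isClosed_le (continuous_finset_sum _ fun i _ =>
      continuous_const.mul (continuous_apply i)) continuous_const
  · -- convex
    intro p hp q hq a b ha hb hab
    refine ⟨convex_stdSimplex ℝ (Fin n) hp.1 hq.1 ha hb hab, ?_⟩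
    intro y hy
    have hcalc : ∑ i, y i * (a • p + b • q) i
        = a * ∑ i, y i * p i + b * ∑ i, y i * q i := by
      rw [Finset.mul_sum, Finset.mul_sum, ← Finset.sum_add_distrib]
      apply Finset.sum_congr rfl
      intros
      simp only [Pi.add_apply, Pi.smul_apply, smul_eq_mul]
      ring
    rw [hcalc]
    have h1 := hp.2 y hy
    have h2 := hq.2 y hy
    nlinarith
  · intro x
    constructor
    · intro hxK
      exact sep x (by simpa using hxK)
    · rintro ⟨π, hπ, hge⟩
      by_contra hxK
      have := hstrict π hπ x hxK
      linarith
end
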